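/- The spinor Dunkl operators for the q-Toda theory represent the relations of the one-dimensional nil-DAHA: the operators on the spinor space V satisfy Ŷ ∘ Ŷ′ = id_V = Ŷ′ ∘ Ŷ (so Ŷ is invertible with inverse Ŷ′), π̂ ∘ π̂ = id_V, T̂ ∘ (T̂ + id_V) = 0, π̂ ∘ Ŷ ∘ π̂ = q^{-1/2} · Ŷ′, and T̂ ∘ Ŷ′ = Ŷ ∘ (T̂ + id_V). -/

import Mathlib

/-!
The spinor Dunkl operators for the q-Toda theory of type A₁, acting on the space
`V = L × L` of spinors, where `L = K[X,X⁻¹]` is the ring of Laurent polynomials over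
`K = ℚ(u)`, `q = u⁴`.
-/

noncomputable section

open LaurentPolynomial

/-- The ground field `K = ℚ(u)`. -/
abbrev K : Type := RatFunc ℚ

/-- `u`, with `q = u⁴` (so `u = q^{1/4}`). -/
def u : K := RatFunc.X

/-- `q = u⁴`. -/
def q : K := u ^ 4

/-- The ring of Laurent polynomials `K[X,X⁻¹]`. -/
abbrev L : Type := LaurentPolynomial K

/-- The space of spinors: pairs of Laurent polynomials. -/
abbrev V : Type := L × L

/-- The `K`-algebra automorphism `Γ` of `L` with `Γ(X) = q^{1/2}X`. -/
def gam (f : L) : L := f.coeff.sum fun e r => (r * (u ^ 2) ^ e) • T e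

/-- The inverse automorphism `Γ⁻¹`, with `Γ⁻¹(X) = q^{-1/2}X`. -/
def gamInv (f : L) : L := f.coeff.sum fun e r => (r * (u ^ 2) ^ (-e)) • T e

/-- The spinor operator `T̂(f₁,f₂) = (0, f₁ - f₂)`. -/
def That (p : V) : V := (0, p.1 - p.2)

/-- The spinor operator `π̂(f₁,f₂) = (X·f₂ + X⁻¹·(f₁-f₂), X⁻¹·(f₁-f₂))`. -/
def piHat (p : V) : V :=
  (T 1 * p.2 + T (-1) * (p.1 - p.2), T (-1) * (p.1 - p.2))

/-- The spinor Dunkl operator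
`Ŷ(f₁,f₂) = (Γ⁻¹(f₁-f₂), Γ(f₂) - Γ(X⁻²·(f₂-f₁)))`. -/
def Yhat (p : V) : V :=
  (gamInv (p.1 - p.2), gam p.2 - gam (T (-2) * (p.2 - p.1)))

/-- The spinor Dunkl operator
`Ŷ′(f₁,f₂) = ((1-X⁻²)·Γ(f₁) + Γ⁻¹(f₂), Γ⁻¹(f₂) - X⁻²·Γ(f₁))`. -/
def Yhat' (p : V) : V :=
  ((1 - T (-2)) * gam p.1 + gamInv p.2, gamInv p.2 - T (-2) * gam p.1)

lemma u_ne_zero : u ≠ 0 := RatFunc.X_ne_zero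
lemma u2_ne_zero : (u ^ 2 : K) ≠ 0 := pow_ne_zero _ u_ne_zero

def gamHom : Multiplicative ℤ →* L where
  toFun n := C ((u ^ 2) ^ (Multiplicative.toAdd n)) * T (Multiplicative.toAdd n)
  map_one' := by simp
  map_mul' a b := by
    simp only [toAdd_mul, zpow_add₀ u2_ne_zero, map_mul, T_add]
    ring

def gamInvHom : Multiplicative ℤ →* L where
  toFun n := C ((u ^ 2) ^ (-Multiplicative.toAdd n)) * T (Multiplicative.toAdd n)
  map_one' := by simp
  map_mul' a b := by
    simp only [toAdd_mul, neg_add, zpow_add₀ u2_ne_zero, map_mul, T_add]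
    ring

def gamA : L →ₐ[K] L := AddMonoidAlgebra.lift K L ℤ gamHom
def gamInvA : L →ₐ[K] L := AddMonoidAlgebra.lift K L ℤ gamInvHom


lemma C_eq_algebraMap (c : K) : (C c : L) = algebraMap K L c := by
  rw [← single_eq_C]; rfl

lemma gam_eq (f : L) : gam f = gamA f := by
  rw [gamA, AddMonoidAlgebra.lift_apply, gam]
  refine Finsupp.sum_congr fun e _ => ?_
  show _ = _ • (C _ * T _)
  rw [← single_eq_C_mul_T, T, AddMonoidAlgebra.smul_single', AddMonoidAlgebra.smul_single', mul_one]
  rfl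

lemma gamInv_eq (f : L) : gamInv f = gamInvA f := by
  rw [gamInvA, AddMonoidAlgebra.lift_apply, gamInv]
  refine Finsupp.sum_congr fun e _ => ?_
  show _ = _ • (C _ * T _)
  rw [← single_eq_C_mul_T, T, AddMonoidAlgebra.smul_single', AddMonoidAlgebra.smul_single', mul_one]
  rfl

lemma gam_T (n : ℤ) : gam (T n) = C ((u ^ 2) ^ n) * T n := by
  rw [gam_eq, T, gamA, AddMonoidAlgebra.lift_single]
  simp [gamHom]

lemma gamInv_T (n : ℤ) : gamInv (T n) = C ((u ^ 2) ^ (-n)) * T n := by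
  rw [gamInv_eq, T, gamInvA, AddMonoidAlgebra.lift_single]
  simp [gamInvHom]

lemma gam_mul (f g : L) : gam (f * g) = gam f * gam g := by
  simp [gam_eq, map_mul]

lemma gamInv_mul (f g : L) : gamInv (f * g) = gamInv f * gamInv g := by
  simp [gamInv_eq, map_mul]

lemma gam_add (f g : L) : gam (f + g) = gam f + gam g := by simp [gam_eq, map_add]
lemma gamInv_add (f g : L) : gamInv (f + g) = gamInv f + gamInv g := by
  simp [gamInv_eq, map_add]
lemma gam_sub (f g : L) : gam (f - g) = gam f - gam g := by simp [gam_eq, map_sub]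
lemma gamInv_sub (f g : L) : gamInv (f - g) = gamInv f - gamInv g := by
  simp [gamInv_eq, map_sub]
lemma gam_neg (f : L) : gam (-f) = -gam f := by simp [gam_eq, map_neg]
lemma gamInv_neg (f : L) : gamInv (-f) = -gamInv f := by simp [gamInv_eq, map_neg]
lemma gam_zero : gam 0 = 0 := by simp [gam_eq]
lemma gamInv_zero : gamInv 0 = 0 := by simp [gamInv_eq]
lemma gam_C (c : K) : gam (C c) = C c := by
  rw [gam_eq, C_eq_algebraMap, AlgHom.commutes]
lemma gamInv_C (c : K) : gamInv (C c) = C c := by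
  rw [gamInv_eq, C_eq_algebraMap, AlgHom.commutes]
lemma gam_smul (c : K) (f : L) : gam (c • f) = c • gam f := by
  simp [gam_eq, map_smul]
lemma gamInv_smul (c : K) (f : L) : gamInv (c • f) = c • gamInv f := by
  simp [gamInv_eq, map_smul]

lemma zpow_mul_zpow_neg (n : ℤ) : ((u ^ 2 : K)) ^ n * (u ^ 2 : K) ^ (-n) = 1 := by
  rw [← zpow_add₀ u2_ne_zero]; simp

lemma gamInv_gam (f : L) : gamInv (gam f) = f := by
  rw [gam_eq, gamInv_eq]
  have h : gamInvA.comp gamA = AlgHom.id K L := by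
    refine AddMonoidAlgebra.algHom_ext ?_ (Subsingleton.elim _ _)
    intro n
    show gamInvA (gamA ((AddMonoidAlgebra.single n 1 : L))) = AddMonoidAlgebra.single n 1
    have h1 : (AddMonoidAlgebra.single n 1 : L) = T n := rfl
    rw [h1, ← gam_eq, gam_T, ← gamInv_eq, gamInv_mul, gamInv_C, gamInv_T, ← mul_assoc,
      ← map_mul, zpow_mul_zpow_neg]
    simp
  simpa using DFunLike.congr_fun h f

lemma gam_gamInv (f : L) : gam (gamInv f) = f := by
  rw [gam_eq, gamInv_eq]
  have h : gamA.comp gamInvA = AlgHom.id K L := by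
    refine AddMonoidAlgebra.algHom_ext ?_ (Subsingleton.elim _ _)
    intro n
    show gamA (gamInvA ((AddMonoidAlgebra.single n 1 : L))) = AddMonoidAlgebra.single n 1
    have h1 : (AddMonoidAlgebra.single n 1 : L) = T n := rfl
    rw [h1, ← gamInv_eq, gamInv_T, ← gam_eq, gam_mul, gam_C, gam_T, ← mul_assoc,
      ← map_mul, mul_comm ((u^2:K)^(-n)), zpow_mul_zpow_neg]
    simp
  simpa using DFunLike.congr_fun h f

/-- The spinor Dunkl operators represent the relations of the one-dimensional nil-DAHA:
`Ŷ∘Ŷ′ = id = Ŷ′∘Ŷ`, `π̂∘π̂ = id`, `T̂∘(T̂ + id) = 0`, `π̂∘Ŷ∘π̂ = q^{-1/2}·Ŷ′`, and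
`T̂∘Ŷ′ = Ŷ∘(T̂ + id)`. -/
theorem spinor_dunkl_nil_daha_relations :
    (∀ p : V, Yhat (Yhat' p) = p) ∧
    (∀ p : V, Yhat' (Yhat p) = p) ∧
    (∀ p : V, piHat (piHat p) = p) ∧
    (∀ p : V, That (That p + p) = 0) ∧
    (∀ p : V, piHat (Yhat (piHat p)) = ((u ^ 2)⁻¹ : K) • Yhat' p) ∧
    (∀ p : V, That (Yhat' p) = Yhat (That p + p)) := by
  have hU : (T (-1) : L) * T 1 = 1 := by rw [← T_add]; norm_num
  have hV : (T (-2) : L) = T (-1) * T (-1) := by rw [← T_add]; norm_num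
  refine ⟨?_, ?_, ?_, ?_, ?_, ?_⟩
  · rintro ⟨f₁, f₂⟩
    simp only [Yhat, Yhat']
    refine Prod.ext ?_ ?_
    · show gamInv _ = _
      have e : ((1 - T (-2)) * gam f₁ + gamInv f₂) - (gamInv f₂ - T (-2) * gam f₁)
          = gam f₁ := by ring
      rw [e, gamInv_gam]
    · show gam _ - gam _ = _
      have e : (T (-2) : L) * ((gamInv f₂ - T (-2) * gam f₁)
          - ((1 - T (-2)) * gam f₁ + gamInv f₂)) = -(T (-2) * gam f₁) := by ring
      rw [e, gam_neg, gam_sub, gam_gamInv]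
      ring
  · rintro ⟨f₁, f₂⟩
    simp only [Yhat, Yhat']
    refine Prod.ext ?_ ?_
    · show (1 - T (-2)) * gam (gamInv _) + gamInv _ = _
      rw [gam_gamInv, gamInv_sub, gamInv_gam, gamInv_gam]
      ring
    · show gamInv _ - T (-2) * gam (gamInv _) = _
      rw [gam_gamInv, gamInv_sub, gamInv_gam, gamInv_gam]
      ring
  · rintro ⟨f₁, f₂⟩
    simp only [piHat]
    refine Prod.ext ?_ ?_
    · show T 1 * _ + T (-1) * _ = f₁
      linear_combination f₁ * hU
    · show T (-1) * _ = f₂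
      linear_combination f₂ * hU
  · rintro ⟨f₁, f₂⟩
    simp only [That, Prod.mk_add_mk]
    refine Prod.ext ?_ ?_
    · rfl
    · show (0 + f₁) - (f₁ - f₂ + f₂) = 0
      ring
  · rintro ⟨f₁, f₂⟩
    simp only [piHat, Yhat, Yhat', Prod.smul_mk]
    have e1 : (T 1 * f₂ + T (-1) * (f₁ - f₂)) - T (-1) * (f₁ - f₂) = T 1 * f₂ := by
      ring
    have e2 : (T (-2) : L) * (T (-1) * (f₁ - f₂) - (T 1 * f₂ + T (-1) * (f₁ - f₂)))
        = -(T (-1) * f₂) := by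
      rw [hV]
      linear_combination (-(T (-1) : L) * f₂) * hU
    have z1 : ((u ^ 2 : K)) ^ (-1 : ℤ) = (u ^ 2)⁻¹ := by
      rw [zpow_neg, zpow_one]
    refine Prod.ext ?_ ?_
    · show T 1 * _ + T (-1) * _ = ((u ^ 2)⁻¹ : K) • _
      rw [e1, e2, gamInv_mul, gamInv_T, gam_neg, gam_mul, gam_mul, gam_sub, gam_T, z1, Algebra.smul_def, ← _root_.C_eq_algebraMap, hV]
      linear_combination (C ((u ^ 2)⁻¹ : K) * (gam f₁ + gamInv f₂)) * hU
    · show T (-1) * _ = ((u ^ 2)⁻¹ : K) • _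
      rw [e1, e2, gamInv_mul, gamInv_T, gam_neg, gam_mul, gam_mul, gam_sub, gam_T, z1, Algebra.smul_def, ← _root_.C_eq_algebraMap, hV]
      linear_combination (C ((u ^ 2)⁻¹ : K) * gamInv f₂) * hU
  · rintro ⟨f₁, f₂⟩
    simp only [That, Yhat, Yhat', Prod.mk_add_mk]
    refine Prod.ext ?_ ?_
    · show (0 : L) = gamInv _
      have e : ((0 : L) + f₁) - (f₁ - f₂ + f₂) = 0 := by ring
      rw [e, gamInv_zero]
    · show _ = gam _ - gam _
      have e : (T (-2) : L) * ((f₁ - f₂ + f₂) - (0 + f₁)) = 0 := by ring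
      have e' : f₁ - f₂ + f₂ = f₁ := by ring
      rw [e, e', gam_zero]
      ring
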